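/- Let G^c be a vertex-coloured interval graph: the intersection graph of closed real intervals I_1 = [l_1, r_1], …, I_n = [l_n, r_n] (vertices i ≠ j adjacent iff I_i ∩ I_j ≠ ∅), with r_1 ≤ r_2 ≤ … ≤ r_n, together with a surjective colouring c : {1, …, n} → C. For S ⊆ C and i ∈ {1, …, n}, define f(S, i) ∈ ℕ ∪ {∞} as the minimum cardinality of a proper i-prefix dominating set whose set of colours is exactly S (∞ if none exists). Then the tropical domination number of G^c equals the minimum, over all S ⊆ C and all i ∈ {1, …, n} such that {1, …, i} is a dominating set of G, of the quantity f(S, i) + |C \ S|. -/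

import Mathlib

/-- The intersection graph of the closed intervals `[l i, r i]`, `i : Fin n`:
distinct vertices are adjacent iff their intervals meet. -/
def intervalGraph (n : ℕ) (l r : Fin n → ℝ) : SimpleGraph (Fin n) where
  Adj i j := i ≠ j ∧ (Set.Icc (l i) (r i) ∩ Set.Icc (l j) (r j)).Nonempty
  symm := by
    constructor
    intro i j h
    exact ⟨h.1.symm, by rw [Set.inter_comm]; exact h.2⟩
  loopless := by
    constructor
    intro i h
    exact h.1 rfl

/-- `U` dominates the vertex `k` in `G`: `k ∈ U` or `k` is adjacent to a vertex of `U`. -/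
def DominatesVertex {V : Type*} (G : SimpleGraph V) (U : Finset V) (k : V) : Prop :=
  k ∈ U ∨ ∃ u ∈ U, G.Adj u k

/-- `S` is a dominating set of `G`: every vertex is in `S` or has a neighbour in `S`. -/
def IsDomSet {V : Type*} (G : SimpleGraph V) (S : Finset V) : Prop :=
  ∀ v : V, v ∈ S ∨ ∃ u ∈ S, G.Adj u v

/-- `S` is tropical w.r.t. the colouring `col`: every colour appears on a vertex of `S`. -/
def IsTropical {V C : Type*} (col : V → C) (S : Finset V) : Prop :=
  ∀ ch : C, ∃ v ∈ S, col v = ch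

/-- The tropical domination number: the least size of a tropical dominating set. -/
noncomputable def tropDomNum {V C : Type*} (G : SimpleGraph V) (col : V → C) : ℕ :=
  sInf {k : ℕ | ∃ S : Finset V, IsDomSet G S ∧ IsTropical col S ∧ S.card = k}

/-- `U` is an `i`-prefix dominating set: `i ∈ U` and `U` dominates `{1, …, i}`. -/
def PrefixDominating (n : ℕ) (l r : Fin n → ℝ) (U : Finset (Fin n)) (i : Fin n) : Prop :=
  i ∈ U ∧ ∀ j : Fin n, j ≤ i → DominatesVertex (intervalGraph n l r) U j

/-- `U` is proper: for no two distinct `i, j ∈ U` does `Iᵢ ⊆ Iⱼ` hold. -/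
def ProperSet (n : ℕ) (l r : Fin n → ℝ) (U : Finset (Fin n)) : Prop :=
  ∀ i ∈ U, ∀ j ∈ U, i ≠ j → ¬ Set.Icc (l i) (r i) ⊆ Set.Icc (l j) (r j)

/-- `f(S, i)`: the least number of vertices of a proper `i`-prefix dominating set whose
set of colours is exactly `S`, as an extended natural number (`⊤` if none exists). -/
noncomputable def prefixDomFun {C : Type*} [DecidableEq C] (n : ℕ) (l r : Fin n → ℝ)
    (col : Fin n → C) (S : Finset C) (i : Fin n) : ℕ∞ :=
  sInf {x : ℕ∞ | ∃ U : Finset (Fin n), PrefixDominating n l r U i ∧ ProperSet n l r U ∧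
    U.image col = S ∧ (U.card : ℕ∞) = x}

lemma intervalGraph_adj {n : ℕ} {l r : Fin n → ℝ} {i j : Fin n} :
    (intervalGraph n l r).Adj i j ↔
      i ≠ j ∧ (Set.Icc (l i) (r i) ∩ Set.Icc (l j) (r j)).Nonempty := Iff.rfl

lemma dominates_mono {V : Type*} {G : SimpleGraph V} {U U' : Finset V} (h : U ⊆ U')
    {k : V} (hk : DominatesVertex G U k) : DominatesVertex G U' k := by
  rcases hk with hk | ⟨u, hu, hadj⟩
  · exact Or.inl (h hk)
  · exact Or.inr ⟨u, h hu, hadj⟩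

lemma isDomSet_erase (n : ℕ) (l r : Fin n → ℝ) (hlr : ∀ i, l i ≤ r i)
    {D : Finset (Fin n)} (hD : IsDomSet (intervalGraph n l r) D)
    {a b : Fin n} (hb : b ∈ D) (hab : a ≠ b)
    (hsub : Set.Icc (l a) (r a) ⊆ Set.Icc (l b) (r b)) :
    IsDomSet (intervalGraph n l r) (D.erase a) := by
  intro v
  have hamem : l a ∈ Set.Icc (l a) (r a) := ⟨le_rfl, hlr a⟩
  rcases hD v with hv | ⟨u, hu, hadj⟩
  · by_cases hva : v = a
    · subst hva
      refine Or.inr ⟨b, Finset.mem_erase.2 ⟨hab.symm, hb⟩, ?_⟩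
      exact intervalGraph_adj.2 ⟨hab.symm, ⟨l v, hsub hamem, hamem⟩⟩
    · exact Or.inl (Finset.mem_erase.2 ⟨hva, hv⟩)
  · by_cases hua : u = a
    · subst hua
      by_cases hvb : v = b
      · subst hvb
        exact Or.inl (Finset.mem_erase.2 ⟨hab.symm, hb⟩)
      · refine Or.inr ⟨b, Finset.mem_erase.2 ⟨hab.symm, hb⟩, ?_⟩
        obtain ⟨x, hx1, hx2⟩ := (intervalGraph_adj.1 hadj).2
        exact intervalGraph_adj.2 ⟨Ne.symm hvb, ⟨x, hsub hx1, hx2⟩⟩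
    · exact Or.inr ⟨u, Finset.mem_erase.2 ⟨hua, hu⟩, hadj⟩

lemma exists_proper (n : ℕ) (l r : Fin n → ℝ) (hlr : ∀ i, l i ≤ r i) :
    ∀ m (D : Finset (Fin n)), D.card ≤ m → IsDomSet (intervalGraph n l r) D →
      ∃ U, U ⊆ D ∧ ProperSet n l r U ∧ IsDomSet (intervalGraph n l r) U := by
  intro m
  induction m with
  | zero =>
      intro D hc hD
      have hDe : D = ∅ := Finset.card_eq_zero.1 (Nat.le_zero.1 hc)
      refine ⟨D, Finset.Subset.refl D, ?_, hD⟩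
      intro i hi
      simp [hDe] at hi
  | succ m ih =>
      intro D hc hD
      by_cases hP : ProperSet n l r D
      · exact ⟨D, Finset.Subset.refl D, hP, hD⟩
      · unfold ProperSet at hP
        push_neg at hP
        obtain ⟨a, ha, b, hb, hab, hsub⟩ := hP
        have hc1 : 1 ≤ D.card := Finset.card_pos.2 ⟨a, ha⟩
        have hce := Finset.card_erase_of_mem ha
        obtain ⟨U, hU1, hU2, hU3⟩ := ih (D.erase a) (by omega)
          (isDomSet_erase n l r hlr hD hb hab hsub)
        exact ⟨U, hU1.trans (Finset.erase_subset _ _), hU2, hU3⟩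

/-- for a vertex-coloured interval graph (vertices ordered non-decreasingly
by right endpoints), the tropical domination number equals the minimum over all colour
sets `S ⊆ C` and vertices `i` such that the prefix `{1, …, i}` dominates `G` of
`f(S, i) + |C \ S|`. -/
theorem tropDomNum_eq_prefix_min
    {C : Type*} [Fintype C] [DecidableEq C] [Nonempty C]
    (n : ℕ) (l r : Fin n → ℝ) (hlr : ∀ i, l i ≤ r i) (hmono : Monotone r)
    (col : Fin n → C) (hsurj : Function.Surjective col) :
    (tropDomNum (intervalGraph n l r) col : ℕ∞) =
      sInf {x : ℕ∞ | ∃ (S : Finset C) (i : Fin n),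
        (∀ k : Fin n, DominatesVertex (intervalGraph n l r) (Finset.Iic i) k) ∧
        x = prefixDomFun n l r col S i + ((Finset.univ \ S).card : ℕ∞)} := by
  classical
  have hne : Nonempty (Fin n) := by
    obtain ⟨v, _⟩ := hsurj (Classical.arbitrary C)
    exact ⟨v⟩
  have hTne : {k : ℕ | ∃ S : Finset (Fin n), IsDomSet (intervalGraph n l r) S ∧
      IsTropical col S ∧ S.card = k}.Nonempty := by
    refine ⟨(Finset.univ : Finset (Fin n)).card, Finset.univ, ?_, ?_, rfl⟩
    · intro v; exact Or.inl (Finset.mem_univ v)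
    · intro ch; obtain ⟨v, hv⟩ := hsurj ch; exact ⟨v, Finset.mem_univ v, hv⟩
  apply le_antisymm
  · refine le_sInf ?_
    rintro x ⟨S, i, hdom, rfl⟩
    by_cases hf : prefixDomFun n l r col S i = ⊤
    · simp [hf]
    · have hWne : {x : ℕ∞ | ∃ U : Finset (Fin n), PrefixDominating n l r U i ∧
          ProperSet n l r U ∧ U.image col = S ∧ (U.card : ℕ∞) = x}.Nonempty := by
        by_contra hcon
        rw [Set.not_nonempty_iff_eq_empty] at hcon
        exact hf (by rw [prefixDomFun, hcon, sInf_empty])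
      obtain ⟨U, hpre, hprop, hcolU, hcard⟩ := csInf_mem hWne
      set Tset := (Finset.univ \ S).image (Function.surjInv hsurj) with hTset
      set D := U ∪ Tset with hDdef
      have hDdom : IsDomSet (intervalGraph n l r) D := by
        intro k
        by_cases hk : k ≤ i
        · exact dominates_mono Finset.subset_union_left (hpre.2 k hk)
        · push_neg at hk
          rcases hdom k with hk' | ⟨u, hu, hadj⟩
          · exact absurd (Finset.mem_Iic.1 hk') (not_le.2 hk)
          · have hui : u ≤ i := Finset.mem_Iic.1 hu
            refine Or.inr ⟨i, Finset.mem_union_left _ hpre.1, ?_⟩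
            obtain ⟨x, ⟨hx1, hx2⟩, ⟨hx3, hx4⟩⟩ := (intervalGraph_adj.1 hadj).2
            refine intervalGraph_adj.2 ⟨hk.ne, ⟨max (l i) (l k),
              ⟨le_max_left _ _, ?_⟩, ⟨le_max_right _ _, ?_⟩⟩⟩
            · exact max_le (hlr i) (hx3.trans (hx2.trans (hmono hui)))
            · exact max_le ((hlr i).trans (hmono hk.le))
                (hx3.trans (hx2.trans ((hmono hui).trans (hmono hk.le))))
      have hDtrop : IsTropical col D := by
        intro ch
        by_cases hch : ch ∈ S
        · rw [← hcolU] at hch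
          obtain ⟨v, hv, hv2⟩ := Finset.mem_image.1 hch
          exact ⟨v, Finset.mem_union_left _ hv, hv2⟩
        · refine ⟨Function.surjInv hsurj ch, Finset.mem_union_right _ ?_,
            Function.surjInv_eq hsurj ch⟩
          exact Finset.mem_image_of_mem _ (Finset.mem_sdiff.2 ⟨Finset.mem_univ ch, hch⟩)
      have hcardD : D.card ≤ U.card + (Finset.univ \ S).card := by
        calc D.card ≤ U.card + Tset.card := Finset.card_union_le _ _
          _ ≤ U.card + (Finset.univ \ S).card := by
              exact Nat.add_le_add_left (Finset.card_image_le) _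
      have h1 : tropDomNum (intervalGraph n l r) col ≤ D.card :=
        Nat.sInf_le ⟨D, hDdom, hDtrop, rfl⟩
      have hfval : prefixDomFun n l r col S i = (U.card : ℕ∞) := by
        rw [prefixDomFun, ← hcard]
      calc (tropDomNum (intervalGraph n l r) col : ℕ∞) ≤ (D.card : ℕ∞) := by
            exact_mod_cast h1
        _ ≤ (U.card : ℕ∞) + ((Finset.univ \ S).card : ℕ∞) := by exact_mod_cast hcardD
        _ = prefixDomFun n l r col S i + ((Finset.univ \ S).card : ℕ∞) := by rw [hfval]
  · obtain ⟨D, hDdom, hDtrop, hDcard⟩ := Nat.sInf_mem hTne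
    obtain ⟨U, hUD, hUprop, hUdom⟩ := exists_proper n l r hlr D.card D le_rfl hDdom
    have hUne : U.Nonempty := by
      rcases hUdom (Classical.arbitrary (Fin n)) with h | ⟨u, hu, _⟩
      exacts [⟨_, h⟩, ⟨u, hu⟩]
    set i := U.max' hUne with hi
    set S := U.image col with hS
    have hUIic : U ⊆ Finset.Iic i := by
      intro u hu; exact Finset.mem_Iic.2 (Finset.le_max' U u hu)
    have hIic : ∀ k : Fin n, DominatesVertex (intervalGraph n l r) (Finset.Iic i) k :=
      fun k => dominates_mono hUIic (hUdom k)
    have hxmem : prefixDomFun n l r col S i + ((Finset.univ \ S).card : ℕ∞) ∈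
        {x : ℕ∞ | ∃ (S : Finset C) (i : Fin n),
          (∀ k : Fin n, DominatesVertex (intervalGraph n l r) (Finset.Iic i) k) ∧
          x = prefixDomFun n l r col S i + ((Finset.univ \ S).card : ℕ∞)} :=
      ⟨S, i, hIic, rfl⟩
    refine (sInf_le hxmem).trans ?_
    have hfle : prefixDomFun n l r col S i ≤ (U.card : ℕ∞) := by
      refine sInf_le ⟨U, ⟨U.max'_mem hUne, fun j _ => hUdom j⟩, hUprop, rfl, rfl⟩
    have hcount : (Finset.univ \ S).card ≤ (D \ U).card := by
      choose g hg1 hg2 using hDtrop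
      refine Finset.card_le_card_of_injOn g ?_ ?_
      · intro ch hch
        rw [Finset.mem_coe, Finset.mem_sdiff] at hch ⊢
        refine ⟨hg1 ch, fun hmem => hch.2 ?_⟩
        rw [hS, ← hg2 ch]
        exact Finset.mem_image_of_mem col hmem
      · intro a _ b _ hab
        rw [← hg2 a, ← hg2 b, hab]
    have htot := Finset.card_sdiff_add_card_eq_card hUD
    have htotal : U.card + (Finset.univ \ S).card ≤ D.card := by omega
    calc prefixDomFun n l r col S i + ((Finset.univ \ S).card : ℕ∞)
        ≤ (U.card : ℕ∞) + ((Finset.univ \ S).card : ℕ∞) := add_le_add_left hfle _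
      _ ≤ (D.card : ℕ∞) := by exact_mod_cast htotal
      _ = (tropDomNum (intervalGraph n l r) col : ℕ∞) := by rw [hDcard]; rfl
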